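/- Let S be a string of length n whose OC array factorizes as OC_S = 1^{t₁} 0^{k₁} 1^{t₂} 0^{k₂} ⋯ 1^{t_m} 0^{k_m}, where t₁, …, t_m ≥ 1, k₁, …, k_{m−1} ≥ 1 and k_m ≥ 0. Then n ≥ m + ⌊(m−1)/2⌋². -/

import Mathlib

variable {α : Type*}

/-- `β` is a border of `S`: a proper (possibly empty) prefix that is also a suffix. -/
def IsBorder (β S : List α) : Prop :=
  β ≠ S ∧ β <+: S ∧ β <:+ S

/-- `v` occurs in `T` at (0-based) position `p`. -/
def OccursAt (v T : List α) (p : ℕ) : Prop :=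
  p + v.length ≤ T.length ∧ v <+: T.drop p

/-- A string is closed if it has length 1 or it has a border with no internal occurrence. -/
def IsClosedWord (S : List α) : Prop :=
  S.length = 1 ∨ ∃ β, IsBorder β S ∧
    ∀ p, OccursAt β S p → p = 0 ∨ p = S.length - β.length

open Classical in
/-- `OCval S i = 1` if the prefix `S[1..i]` is closed, and `0` otherwise. -/
noncomputable def OCval (S : List α) (i : ℕ) : ℕ :=
  if IsClosedWord (S.take i) then 1 else 0

/-- `Parr S i` is the length of the longest prefix of `S[1..i]` having at least
two (possibly overlapping) occurrences in `S[1..i]`. -/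
noncomputable def Parr (S : List α) (i : ℕ) : ℕ :=
  sSup {ℓ | ∃ p q : ℕ, p < q ∧ OccursAt (S.take ℓ) (S.take i) p ∧
    OccursAt (S.take ℓ) (S.take i) q}

/-- `Barr S i` is the length of the longest border of `S[1..i]`. -/
noncomputable def Barr (S : List α) (i : ℕ) : ℕ :=
  sSup {ℓ | IsBorder (S.take ℓ) (S.take i)}

/-- `Bord S i` is the set of lengths of borders of `S[1..i]`. -/
def Bord (S : List α) (i : ℕ) : Set ℕ :=
  {ℓ | IsBorder (S.take ℓ) (S.take i)}

/-- The substring `S[i..j]` (1-based, inclusive). -/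
def Substr (S : List α) (i j : ℕ) : List α :=
  (S.take j).drop (i - 1)

/-- `S[i..j]` is a maximal closed substring of `S`. -/
def IsMCS (S : List α) (i j : ℕ) : Prop :=
  1 ≤ i ∧ i ≤ j ∧ j ≤ S.length ∧ IsClosedWord (Substr S i j) ∧
    (j = S.length ∨ ¬ IsClosedWord (Substr S i (j + 1))) ∧
    (i = 1 ∨ ¬ IsClosedWord (Substr S (i - 1) j))

open Classical in
/-- Number of maximal blocks of consecutive `1`s in the OC array of `S`. -/
noncomputable def ocRuns (S : List α) : ℕ :=
  ((Finset.Icc 1 S.length).filter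
    (fun i => OCval S i = 1 ∧ (i = 1 ∨ OCval S (i - 1) = 0))).card

/-- The OC array of `S` as a list (1-based entries). -/
noncomputable def ocList (S : List α) : List ℕ :=
  (List.range S.length).map (fun j => OCval S (j + 1))

-- ===== auxiliary development =====

namespace OC9

def Occ (S : List α) (p ℓ : ℕ) : Prop := (S.drop p).take ℓ = S.take ℓ
def Brd (S : List α) (i ℓ : ℕ) : Prop := ℓ < i ∧ Occ S (i - ℓ) ℓ
def NoInt (S : List α) (i ℓ : ℕ) : Prop :=
  ∀ p, 0 < p → p + ℓ ≤ i → Occ S p ℓ → p = i - ℓ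

variable {S : List α}

lemma take_take_eq {ℓ i : ℕ} (h : ℓ ≤ i) : (S.take i).take ℓ = S.take ℓ := by
  rw [List.take_take, inf_of_le_left h]

lemma take_eq_seg {i p ℓ : ℕ} (h : p + ℓ ≤ i) :
    ((S.take i).drop p).take ℓ = (S.drop p).take ℓ := by
  rw [List.drop_take, List.take_take, inf_of_le_left (by omega : ℓ ≤ i - p)]

lemma len_take {ℓ : ℕ} (h : ℓ ≤ S.length) : (S.take ℓ).length = ℓ := by
  rw [List.length_take]; omega

lemma prefix_take {ℓ i : ℕ} (h : ℓ ≤ i) : S.take ℓ <+: S.take i := by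
  rw [← take_take_eq h]; exact List.take_prefix _ _

lemma prefix_of_take {β : List α} {i : ℕ} (h : β <+: S.take i) (hn : i ≤ S.length) :
    β = S.take β.length ∧ β.length ≤ i := by
  have hl : β.length ≤ i := by
    have := h.length_le
    rw [List.length_take] at this; omega
  have := List.prefix_iff_eq_take.mp h
  rw [take_take_eq hl] at this
  exact ⟨this, hl⟩

lemma suffix_iff_occ {ℓ i : ℕ} (hℓ : ℓ ≤ i) (hn : i ≤ S.length) :
    (S.take ℓ <:+ S.take i) ↔ Occ S (i - ℓ) ℓ := by
  have hdrop : (S.take i).drop (i - ℓ) = (S.drop (i - ℓ)).take ℓ := by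
    rw [List.drop_take]; congr 1; omega
  have e : (S.take i).length - (S.take ℓ).length = i - ℓ := by
    simp [List.length_take]; omega
  constructor
  · intro h
    have := List.suffix_iff_eq_drop.mp h
    rw [e] at this
    unfold Occ
    rw [← hdrop, ← this]
  · intro h
    rw [List.suffix_iff_eq_drop, e, hdrop]
    exact h.symm

lemma occursAt_iff {ℓ i p : ℕ} (hℓ : ℓ ≤ S.length) (hn : i ≤ S.length) :
    OccursAt (S.take ℓ) (S.take i) p ↔ (p + ℓ ≤ i ∧ Occ S p ℓ) := by
  unfold OccursAt
  rw [len_take hℓ, len_take hn]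
  constructor
  · rintro ⟨h1, h2⟩
    refine ⟨h1, ?_⟩
    have := List.prefix_iff_eq_take.mp h2
    rw [len_take hℓ, take_eq_seg h1] at this
    exact this.symm
  · rintro ⟨h1, h2⟩
    refine ⟨h1, ?_⟩
    rw [List.prefix_iff_eq_take, len_take hℓ, take_eq_seg h1]
    exact h2.symm

lemma closed_iff {i : ℕ} (h1 : 1 ≤ i) (hn : i ≤ S.length) :
    IsClosedWord (S.take i) ↔ (i = 1 ∨ ∃ ℓ, Brd S i ℓ ∧ NoInt S i ℓ) := by
  have hlen : (S.take i).length = i := len_take hn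
  constructor
  · rintro (h | ⟨β, ⟨hne, hpre, hsuf⟩, hocc⟩)
    · left; omega
    · right
      obtain ⟨hβ, hβl⟩ := prefix_of_take hpre hn
      set ℓ := β.length with hℓdef
      have hℓi : ℓ < i := by
        rcases Nat.lt_or_ge ℓ i with h | h
        · exact h
        · exfalso; apply hne
          have : ℓ = i := by omega
          rw [hβ, this]
      refine ⟨ℓ, ⟨hℓi, ?_⟩, ?_⟩
      · exact (suffix_iff_occ (by omega) hn).mp (hβ ▸ hsuf)
      · intro p hp hpl hoccp
        have : OccursAt (S.take ℓ) (S.take i) p :=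
          (occursAt_iff (by omega) hn).mpr ⟨hpl, hoccp⟩
        rcases hocc p (hβ ▸ this) with h | h
        · omega
        · rw [hlen] at h; exact h
  · rintro (h | ⟨ℓ, ⟨hℓi, hoccℓ⟩, hno⟩)
    · left; omega
    · right
      have hℓS : ℓ ≤ S.length := by omega
      refine ⟨S.take ℓ, ⟨?_, prefix_take (le_of_lt hℓi), ?_⟩, ?_⟩
      · intro h
        have := congrArg List.length h
        rw [len_take hℓS, hlen] at this; omega
      · exact (suffix_iff_occ (le_of_lt hℓi) hn).mpr hoccℓ
      · intro p hocc
        obtain ⟨hpl, hoccp⟩ := (occursAt_iff hℓS hn).mp hocc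
        rw [hlen, len_take hℓS]
        rcases Nat.eq_zero_or_pos p with h0 | hpos
        · left; exact h0
        · right; exact hno p hpos hpl hoccp


open Classical in
noncomputable def Bn (S : List α) (i : ℕ) : ℕ := Nat.findGreatest (fun ℓ => Brd S i ℓ) i

lemma occ_zero_len (S : List α) (p : ℕ) : Occ S p 0 := by simp [Occ]

lemma occ_mono {p ℓ ℓ' : ℕ} (h : ℓ' ≤ ℓ) (ho : Occ S p ℓ) : Occ S p ℓ' := by
  have := congrArg (List.take ℓ') ho
  simpa [Occ, List.take_take, inf_of_le_left h] using this

lemma occ_copy {D L u ℓ : ℕ} (h1 : Occ S D L) (h2 : Occ S (D + u) ℓ)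
    (h3 : u + ℓ ≤ L) : Occ S u ℓ := by
  have hl : ℓ ≤ L - u := by omega
  have := congrArg (fun l : List α => (l.drop u).take ℓ) h1
  simp only [List.drop_take, List.drop_drop] at this
  rw [List.take_take, List.take_take, inf_of_le_left hl] at this
  unfold Occ at h2 ⊢
  rw [← this]
  exact h2

lemma brd_le_B {i ℓ : ℕ} (h : Brd S i ℓ) : ℓ ≤ Bn S i := by
  classical
  exact Nat.le_findGreatest (le_of_lt h.1) h

lemma B_spec {i : ℕ} (hi : 1 ≤ i) : Brd S i (Bn S i) := by
  classical
  exact Nat.findGreatest_spec (Nat.zero_le i) ⟨hi, occ_zero_len S i⟩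

lemma B_lt {i : ℕ} (hi : 1 ≤ i) : Bn S i < i := (B_spec hi).1

lemma B_occ {i : ℕ} (hi : 1 ≤ i) : Occ S (i - Bn S i) (Bn S i) := (B_spec hi).2

/-- The longest border of a closed prefix has no internal occurrence. -/
lemma closed_noInt {i : ℕ} (h1 : 1 ≤ i) (hn : i ≤ S.length)
    (hc : IsClosedWord (S.take i)) : NoInt S i (Bn S i) := by
  rcases (closed_iff h1 hn).mp hc with h | ⟨ℓ, hbrd, hno⟩
  · subst h
    intro p hp hpl _
    have : Bn S 1 = 0 := by
      have := B_lt (S := S) (i := 1) le_rfl; omega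
    omega
  · have hℓB : ℓ = Bn S i := by
      rcases Nat.lt_or_ge ℓ (Bn S i) with hlt | hge
      · exfalso
        have hB := B_spec (S := S) (i := i) h1
        have hocc : Occ S (i - Bn S i) ℓ := occ_mono (le_of_lt hlt) hB.2
        have h0 : 0 < i - Bn S i := by have := hB.1; omega
        have := hno (i - Bn S i) h0 (by have := hB.1; omega) hocc
        have hBi := hB.1
        omega
      · exact le_antisymm (brd_le_B hbrd) hge
    rw [← hℓB]; exact hno

lemma closed_B_pos {i : ℕ} (h2 : 2 ≤ i) (hn : i ≤ S.length)
    (hc : IsClosedWord (S.take i)) : 1 ≤ Bn S i := by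
  by_contra h
  have hB0 : Bn S i = 0 := by omega
  have := closed_noInt (by omega) hn hc 1 (by omega) (by omega) (by
    rw [hB0]; exact occ_zero_len S 1)
  omega

lemma open_internal {i : ℕ} (h2 : 2 ≤ i) (hn : i ≤ S.length)
    (hc : ¬ IsClosedWord (S.take i)) :
    ∃ p, 0 < p ∧ p + Bn S i < i ∧ Occ S p (Bn S i) := by
  have := (closed_iff (by omega) hn).not.mp hc
  push_neg at this
  obtain ⟨-, h⟩ := this
  have hB := B_spec (S := S) (i := i) (by omega)
  have := h (Bn S i) hB
  unfold NoInt at this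
  push_neg at this
  obtain ⟨p, hp, hpl, hocc, hne⟩ := this
  exact ⟨p, hp, by omega, hocc⟩

/-- L1 : the longest border grows by at most one. -/
lemma B_succ_le {i : ℕ} (hi : 1 ≤ i) : Bn S (i + 1) ≤ Bn S i + 1 := by
  rcases Nat.eq_zero_or_pos (Bn S (i + 1)) with h0 | hpos
  · omega
  · set ℓ := Bn S (i + 1) with hℓ
    have hB := B_spec (S := S) (i := i + 1) (by omega)
    have hocc : Occ S (i + 1 - ℓ) (ℓ - 1) := occ_mono (by omega) hB.2
    have hbrd : Brd S i (ℓ - 1) := by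
      constructor
      · have := hB.1; omega
      · have : i - (ℓ - 1) = i + 1 - ℓ := by have := hB.1; omega
        rw [this]; exact hocc
    have := brd_le_B hbrd
    omega

lemma B_add_le {i : ℕ} (hi : 1 ≤ i) (u : ℕ) : Bn S (i + u) ≤ Bn S i + u := by
  induction u with
  | zero => simp
  | succ v ih =>
    have := B_succ_le (S := S) (i := i + v) (by omega)
    have h2 : i + (v + 1) = (i + v) + 1 := by omega
    rw [h2]
    omega

/-- L3 : at a 1 → 0 transition the longest border does not grow. -/
lemma B_open_succ_le {i : ℕ} (hi : 1 ≤ i) (hn : i + 1 ≤ S.length)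
    (hc : IsClosedWord (S.take i)) (ho : ¬ IsClosedWord (S.take (i + 1))) :
    Bn S (i + 1) ≤ Bn S i := by
  by_contra h
  have heq : Bn S (i + 1) = Bn S i + 1 := by
    have := B_succ_le (S := S) hi; omega
  apply ho
  rw [closed_iff (by omega) hn]
  right
  refine ⟨Bn S i + 1, by rw [← heq]; exact B_spec (by omega), ?_⟩
  intro p hp hpl hocc
  have hocc' : Occ S p (Bn S i) := occ_mono (by omega) hocc
  have := closed_noInt hi (by omega) hc p hp (by omega) hocc'
  have := B_lt (S := S) hi
  omega

/-- MONO : the longest border strictly increases along closed prefixes. -/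
lemma B_mono {i j : ℕ} (hi : 1 ≤ i) (hij : i < j) (hn : j ≤ S.length)
    (hci : IsClosedWord (S.take i)) (hcj : IsClosedWord (S.take j)) :
    Bn S i < Bn S j := by
  by_contra h
  push_neg at h
  have hBi := B_lt (S := S) hi
  have hocc : Occ S (i - Bn S i) (Bn S j) := occ_mono h (B_occ hi)
  have := closed_noInt (by omega) hn hcj (i - Bn S i) (by omega) (by omega) hocc
  omega

lemma B_closed_succ {i : ℕ} (hi : 1 ≤ i) (hn : i + 1 ≤ S.length)
    (hc : IsClosedWord (S.take i)) (hc' : IsClosedWord (S.take (i + 1))) :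
    Bn S (i + 1) = Bn S i + 1 := by
  have h1 := B_succ_le (S := S) hi
  have h2 := B_mono hi (by omega) hn hc hc'
  omega

/-- Core bound: `j ≤ 2·k_{j+1}` for each internal zero-run (0-based run index `j`). -/
lemma main_bound {S : List α} {m : ℕ} (t k A : ℕ → ℕ)
    (ht : ∀ r, r < m → 1 ≤ t (r + 1))
    (hk : ∀ r, r + 1 < m → 1 ≤ k (r + 1))
    (hA0 : A 0 = 0) (hAs : ∀ r, A (r + 1) = A r + (t (r + 1) + k (r + 1)))
    (hn : A m ≤ S.length)
    (hCl : ∀ r, r < m → ∀ u, u < t (r + 1) → IsClosedWord (S.take (A r + u + 1)))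
    (hOp : ∀ r, r < m → ∀ u, u < k (r + 1) →
      ¬ IsClosedWord (S.take (A r + t (r + 1) + u + 1))) :
    ∀ j, j + 1 < m → j ≤ 2 * k (j + 1) := by
  -- monotonicity of A
  have hAstep : ∀ x, A x ≤ A (x + 1) := by
    intro x; rw [hAs]; omega
  have hAmono : ∀ x y, x ≤ y → A x ≤ A y := by
    intro x y hxy
    induction y with
    | zero => have : x = 0 := by omega
              simp [this]
    | succ z ih =>
      rcases Nat.lt_or_ge x (z + 1) with h | h
      · exact le_trans (ih (by omega)) (hAstep z)
      · have hxz : x = z + 1 := by omega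
        simp [hxz]
  have hAstrict : ∀ x, x < m → A x + 1 ≤ A (x + 1) := by
    intro x hx; have := ht x hx; rw [hAs]; omega
  have hA_le_n : ∀ x, x ≤ m → A x ≤ S.length := fun x hx =>
    le_trans (hAmono x m hx) hn
  have hA1_le_n : ∀ x, x < m → A x + 1 ≤ S.length := by
    intro x hx
    have h1 := hAstrict x hx
    have h2 := hA_le_n (x + 1) (by omega)
    omega
  -- closedness of positions, reindexed
  have hClx : ∀ j, j < m → ∀ x, A j + 1 ≤ x → x ≤ A j + t (j + 1) →
      IsClosedWord (S.take x) := by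
    intro j hj x h1 h2
    have := hCl j hj (x - A j - 1) (by omega)
    have hx : A j + (x - A j - 1) + 1 = x := by omega
    rwa [hx] at this
  have hOpx : ∀ j, j < m → ∀ x, A j + t (j + 1) + 1 ≤ x →
      x ≤ A j + t (j + 1) + k (j + 1) → ¬ IsClosedWord (S.take x) := by
    intro j hj x h1 h2
    have := hOp j hj (x - A j - t (j + 1) - 1) (by omega)
    have hx : A j + t (j + 1) + (x - A j - t (j + 1) - 1) + 1 = x := by omega
    rwa [hx] at this
  -- position bounds
  have hbn : ∀ j, j < m → A j + t (j + 1) ≤ S.length := by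
    intro j hj
    have h1 : A j + t (j + 1) ≤ A (j + 1) := by rw [hAs]; omega
    exact le_trans h1 (hA_le_n (j + 1) (by omega))
  -- within-run border growth
  have run_B : ∀ j, j < m → ∀ v, v < t (j + 1) →
      Bn S (A j + 1 + v) = Bn S (A j + 1) + v := by
    intro j hj v hv
    induction v with
    | zero => simp
    | succ w ih =>
      have hw := ih (by omega)
      have hcs := B_closed_succ (S := S) (i := A j + 1 + w) (by omega)
        (by have := hbn j hj; omega)
        (hClx j hj _ (by omega) (by omega))
        (hClx j hj _ (by omega) (by omega))
      have he : A j + 1 + (w + 1) = A j + 1 + w + 1 := by omega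
      rw [he]
      omega
  have cB : ∀ j, j < m → Bn S (A j + t (j + 1)) = Bn S (A j + 1) + (t (j + 1) - 1) := by
    intro j hj
    have h1 := run_B j hj (t (j + 1) - 1) (by have := ht j hj; omega)
    have h2 : A j + 1 + (t (j + 1) - 1) = A j + t (j + 1) := by
      have := ht j hj; omega
    rwa [h2] at h1
  have c_lt_a : ∀ j, j < m → Bn S (A j + 1) < A j + 1 := fun j hj =>
    B_lt (by omega)
  -- c strictly increases along runs
  have c_step : ∀ j, j + 1 < m → Bn S (A j + 1) < Bn S (A (j + 1) + 1) := by
    intro j hj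
    apply B_mono (by omega) (by have := hAstrict j (by omega); omega)
      (hA1_le_n (j + 1) (by omega))
      (hClx j (by omega) _ le_rfl (by have := ht j (by omega); omega))
      (hClx (j + 1) (by omega) _ le_rfl (by have := ht (j + 1) (by omega); omega))
  have c_chain : ∀ j u, j + u < m → Bn S (A j + 1) + u ≤ Bn S (A (j + u) + 1) := by
    intro j u hu
    induction u with
    | zero => simp
    | succ w ih =>
      have h1 := ih (by omega)
      have h2 := c_step (j + w) (by omega)
      have h3 : j + (w + 1) = (j + w) + 1 := by omega
      rw [h3]
      omega
  have hB1 : Bn S (A 0 + 1) = 0 := by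
    have h1 : A 0 + 1 = 1 := by omega
    rw [h1]
    have := B_lt (S := S) (i := 1) le_rfl; omega
  have c_lb : ∀ j, j < m → j ≤ Bn S (A j + 1) := by
    intro j hj
    have h := c_chain 0 j (by omega)
    rw [hB1] at h
    simpa using h
  -- climb bound and non-increase at run end
  have climb : ∀ j, j + 1 < m →
      Bn S (A (j + 1) + 1) ≤ Bn S (A j + t (j + 1) + 1) + k (j + 1) := by
    intro j hj
    have h1 := B_add_le (S := S) (i := A j + t (j + 1) + 1) (by omega) (k (j + 1))
    have h2 : A j + t (j + 1) + 1 + k (j + 1) = A (j + 1) + 1 := by rw [hAs]; omega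
    rwa [h2] at h1
  have L3app : ∀ j, j + 1 < m →
      Bn S (A j + t (j + 1) + 1) ≤ Bn S (A j + t (j + 1)) := by
    intro j hj
    apply B_open_succ_le (by have := ht j (by omega); omega)
      (by have h1 : A j + t (j + 1) + 1 ≤ A (j + 1) := by
            rw [hAs]; have := hk j hj; omega
          have := hA_le_n (j + 1) (by omega); omega)
      (hClx j (by omega) _ (by have := ht j (by omega); omega) le_rfl)
      (hOpx j (by omega) _ le_rfl (by have := hk j hj; omega))
  -- d_j ≥ j + 1   (stated: c_j + (j+1) ≤ a_j)
  have d_lb : ∀ j, j < m → Bn S (A j + 1) + (j + 1) ≤ A j + 1 := by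
    intro j hj
    induction j with
    | zero => rw [hB1]; omega
    | succ w ih =>
      have hw := ih (by omega)
      have h1 := climb w (by omega)
      have h2 := L3app w (by omega)
      have h3 := cB w (by omega)
      have h4 : A (w + 1) = A w + (t (w + 1) + k (w + 1)) := hAs w
      have h5 := ht w (by omega)
      omega
  -- ================= main argument for fixed j0 =================
  intro j0 hj0
  have hj0m : j0 < m := by omega
  have htj0 := ht j0 hj0m
  have hkj0 := hk j0 hj0
  have hcj0 : j0 + 1 ≤ Bn S (A (j0 + 1) + 1) := c_lb (j0 + 1) (by omega)
  -- s0 : the last run whose start lies inside the border of run j0+1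
  obtain ⟨s0, hs0le, hs0a, hs0b⟩ :
      ∃ s0, s0 ≤ j0 ∧ A s0 + 1 ≤ Bn S (A (j0 + 1) + 1) ∧
        Bn S (A (j0 + 1) + 1) < A (s0 + 1) + 1 := by
    refine ⟨Nat.findGreatest (fun j => A j + 1 ≤ Bn S (A (j0 + 1) + 1)) j0,
      Nat.findGreatest_le j0, ?_, ?_⟩
    · have h := Nat.findGreatest_spec (P := fun j => A j + 1 ≤ Bn S (A (j0 + 1) + 1))
        (m := 0) (n := j0) (Nat.zero_le j0)
        (by show A 0 + 1 ≤ Bn S (A (j0 + 1) + 1); omega)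
      exact h
    · rcases Nat.lt_or_ge (Nat.findGreatest
          (fun j => A j + 1 ≤ Bn S (A (j0 + 1) + 1)) j0) j0 with h | h
      · have := Nat.findGreatest_is_greatest
          (P := fun j => A j + 1 ≤ Bn S (A (j0 + 1) + 1))
          (k := Nat.findGreatest (fun j => A j + 1 ≤ Bn S (A (j0 + 1) + 1)) j0 + 1)
          (n := j0) (by omega) (by omega)
        simp only [not_le] at this
        omega
      · have heq : Nat.findGreatest (fun j => A j + 1 ≤ Bn S (A (j0 + 1) + 1)) j0 = j0 := by
          have := Nat.findGreatest_le (P := fun j => A j + 1 ≤ Bn S (A (j0 + 1) + 1)) j0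
          omega
        rw [heq]
        exact c_lt_a (j0 + 1) (by omega)
  have hs0m : s0 < m := by omega
  -- basic facts
  have hlL : Bn S (A j0 + t (j0 + 1) + 1) ≤ Bn S (A j0 + t (j0 + 1)) := L3app j0 hj0
  have hLb : Bn S (A j0 + t (j0 + 1)) < A j0 + t (j0 + 1) := B_lt (by omega)
  have hLc : Bn S (A j0 + t (j0 + 1)) < Bn S (A (j0 + 1) + 1) := by
    apply B_mono (by omega) (by rw [hAs]; omega)
      (hA1_le_n (j0 + 1) (by omega))
      (hClx j0 (by omega) _ (by omega) le_rfl)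
      (hClx (j0 + 1) (by omega) _ le_rfl (by have := ht (j0 + 1) (by omega); omega))
  have hclimb : Bn S (A (j0 + 1) + 1) ≤ Bn S (A j0 + t (j0 + 1) + 1) + k (j0 + 1) :=
    climb j0 hj0
  have hLn : A j0 + t (j0 + 1) ≤ S.length := hbn j0 hj0m
  -- the border occurrences
  have hOccD : Occ S (A j0 + t (j0 + 1) - Bn S (A j0 + t (j0 + 1)))
      (Bn S (A j0 + t (j0 + 1))) := B_occ (by omega)
  have hOccq : Occ S (A j0 + t (j0 + 1) + 1 - Bn S (A j0 + t (j0 + 1) + 1))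
      (Bn S (A j0 + t (j0 + 1) + 1)) := B_occ (by omega)
  -- key copy argument : Bn(L) ≥ l - 1
  have hBL : 1 ≤ Bn S (A j0 + t (j0 + 1) + 1) →
      Bn S (A j0 + t (j0 + 1) + 1) - 1 ≤ Bn S (Bn S (A j0 + t (j0 + 1))) := by
    intro hl1
    have hD : A j0 + t (j0 + 1) - Bn S (A j0 + t (j0 + 1))
        + (Bn S (A j0 + t (j0 + 1)) + 1 - Bn S (A j0 + t (j0 + 1) + 1))
        = A j0 + t (j0 + 1) + 1 - Bn S (A j0 + t (j0 + 1) + 1) := by omega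
    have hocc2 : Occ S (A j0 + t (j0 + 1) - Bn S (A j0 + t (j0 + 1))
        + (Bn S (A j0 + t (j0 + 1)) + 1 - Bn S (A j0 + t (j0 + 1) + 1)))
        (Bn S (A j0 + t (j0 + 1) + 1) - 1) := by
      rw [hD]; exact occ_mono (by omega) hOccq
    have hocc3 : Occ S (Bn S (A j0 + t (j0 + 1)) + 1 - Bn S (A j0 + t (j0 + 1) + 1))
        (Bn S (A j0 + t (j0 + 1) + 1) - 1) := occ_copy hOccD hocc2 (by omega)
    apply brd_le_B
    constructor
    · omega
    · have he : Bn S (A j0 + t (j0 + 1)) - (Bn S (A j0 + t (j0 + 1) + 1) - 1)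
          = Bn S (A j0 + t (j0 + 1)) + 1 - Bn S (A j0 + t (j0 + 1) + 1) := by omega
      rw [he]; exact hocc3
  -- Claim I : l ≤ c_{s0+1}
  have claimI : Bn S (A j0 + t (j0 + 1) + 1) ≤ Bn S (A (s0 + 1) + 1) := by
    by_contra hcon
    push_neg at hcon
    have hcs1 : s0 + 1 ≤ Bn S (A (s0 + 1) + 1) := c_lb (s0 + 1) (by omega)
    have hBL' := hBL (by omega)
    have hLpos : 1 ≤ Bn S (Bn S (A j0 + t (j0 + 1))) := by omega
    have hLn2 : 2 ≤ Bn S (A j0 + t (j0 + 1)) := by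
      have := B_lt (S := S) (i := Bn S (A j0 + t (j0 + 1))) (by omega); omega
    have hnotCl : ¬ IsClosedWord (S.take (Bn S (A j0 + t (j0 + 1)))) := by
      intro hCL
      have := B_mono (S := S) (i := Bn S (A j0 + t (j0 + 1))) (j := A (s0 + 1) + 1)
        (by omega) (by omega)
        (hA1_le_n (s0 + 1) (by omega))
        hCL
        (hClx (s0 + 1) (by omega) _ le_rfl (by have := ht (s0 + 1) (by omega); omega))
      omega
    obtain ⟨p, hp0, hpB, hpocc⟩ := open_internal hLn2 (by omega) hnotCl
    have hoccp' : Occ S p (Bn S (A (s0 + 1) + 1)) := occ_mono (by omega) hpocc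
    have hpa : A (s0 + 1) + 1 ≤ p + Bn S (A (s0 + 1) + 1) + 1 := by
      by_cases hple : p + Bn S (A (s0 + 1) + 1) ≤ A (s0 + 1) + 1
      · have := closed_noInt (S := S) (i := A (s0 + 1) + 1) (by omega)
          (hA1_le_n (s0 + 1) (by omega))
          (hClx (s0 + 1) (by omega) _ le_rfl (by have := ht (s0 + 1) (by omega); omega))
          p hp0 hple hoccp'
        have := c_lt_a (s0 + 1) (by omega)
        omega
      · omega
    omega
  -- Claim II : l + s0 ≤ c
  have claimII : Bn S (A j0 + t (j0 + 1) + 1) + s0 ≤ Bn S (A (j0 + 1) + 1) := by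
    by_contra hcon
    push_neg at hcon
    have hs01 : 1 ≤ s0 := by omega
    have hds0 : Bn S (A s0 + 1) + (s0 + 1) ≤ A s0 + 1 := d_lb s0 (by omega)
    have hBL' := hBL (by omega)
    have hLn2 : 2 ≤ Bn S (A j0 + t (j0 + 1)) := by
      have := B_lt (S := S) (i := Bn S (A j0 + t (j0 + 1))) (by omega); omega
    have hnotCl : ¬ IsClosedWord (S.take (Bn S (A j0 + t (j0 + 1)))) := by
      intro hCL
      rcases Nat.lt_or_ge (Bn S (A j0 + t (j0 + 1))) (A s0 + 1) with hLa | hLa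
      · have := B_mono (S := S) (i := Bn S (A j0 + t (j0 + 1))) (j := A s0 + 1)
          (by omega) hLa
          (hA1_le_n s0 (by omega))
          hCL
          (hClx s0 (by omega) _ le_rfl (by have := ht s0 (by omega); omega))
        omega
      · have hAs0 : A (s0 + 1) = A s0 + (t (s0 + 1) + k (s0 + 1)) := hAs s0
        have hLbs0 : Bn S (A j0 + t (j0 + 1)) ≤ A s0 + t (s0 + 1) := by
          by_contra hgt
          push_neg at hgt
          exact (hOpx s0 (by omega) (Bn S (A j0 + t (j0 + 1))) (by omega)
            (by omega)) hCL
        have hrB := run_B s0 (by omega) (Bn S (A j0 + t (j0 + 1)) - (A s0 + 1))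
          (by omega)
        have hLi : A s0 + 1 + (Bn S (A j0 + t (j0 + 1)) - (A s0 + 1))
            = Bn S (A j0 + t (j0 + 1)) := by omega
        rw [hLi] at hrB
        omega
    obtain ⟨p, hp0, hpB, hpocc⟩ := open_internal hLn2 (by omega) hnotCl
    have hoccp' : Occ S p (Bn S (A s0 + 1)) := occ_mono (by omega) hpocc
    have hpa : A s0 + 1 ≤ p + Bn S (A s0 + 1) + 1 := by
      by_cases hple : p + Bn S (A s0 + 1) ≤ A s0 + 1
      · have := closed_noInt (S := S) (i := A s0 + 1) (by omega)
          (hA1_le_n s0 (by omega))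
          (hClx s0 (by omega) _ le_rfl (by have := ht s0 (by omega); omega))
          p hp0 hple hoccp'
        have := c_lt_a s0 (by omega)
        omega
      · omega
    omega
  -- combine
  have hchain : Bn S (A (s0 + 1) + 1) + (j0 - s0) ≤ Bn S (A (j0 + 1) + 1) := by
    have h := c_chain (s0 + 1) (j0 - s0) (by omega)
    have he : s0 + 1 + (j0 - s0) = j0 + 1 := by omega
    rw [he] at h
    exact h
  omega

lemma flatten_decomp (g : ℕ → List ℕ) :
    ∀ M r, r < M → ∃ l2, ((List.range M).map g).flatten
      = ((List.range r).map g).flatten ++ (g r ++ l2) := by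
  intro M
  induction M with
  | zero => intro r hr; exact absurd hr (Nat.not_lt_zero r)
  | succ N ih =>
    intro r hr
    rcases Nat.lt_or_ge r N with h | h
    · obtain ⟨l2, hl⟩ := ih r h
      refine ⟨l2 ++ g N, ?_⟩
      rw [List.range_succ, List.map_append, List.flatten_append, hl]
      simp [List.append_assoc]
    · have hrN : r = N := by omega
      subst hrN
      refine ⟨[], ?_⟩
      rw [List.range_succ, List.map_append, List.flatten_append]
      simp

lemma flatten_len (g : ℕ → List ℕ) (M : ℕ) :
    (((List.range M).map g).flatten).length = ∑ j ∈ Finset.range M, (g j).length := by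
  induction M with
  | zero => simp
  | succ N ih =>
    rw [List.range_succ, List.map_append, List.flatten_append, List.length_append,
      Finset.sum_range_succ, ih]
    simp

lemma OCval_one_iff {S : List α} {i : ℕ} : OCval S i = 1 ↔ IsClosedWord (S.take i) := by
  unfold OCval
  split_ifs with h <;> simp [h]

lemma sd_eq : ∀ X : ℕ, (∑ j ∈ Finset.range X, (j + 1) / 2) = (X / 2) * ((X + 1) / 2) := by
  intro X
  induction X with
  | zero => simp
  | succ Y ih =>
    rw [Finset.sum_range_succ, ih]
    have h2 : (Y + 1 + 1) / 2 = Y / 2 + 1 := by omega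
    rw [h2]
    have h3 : (Y + 1) / 2 * (Y / 2 + 1) = Y / 2 * ((Y + 1) / 2) + (Y + 1) / 2 := by ring
    omega

end OC9

/-- If `OC_S = 1^{t₁} 0^{k₁} ⋯ 1^{t_m} 0^{k_m}` with all `t_r ≥ 1`
and `k_r ≥ 1` for `r < m`, `k_m ≥ 0`, then `n ≥ m + ⌊(m−1)/2⌋²`. -/
theorem statement_9 {α : Type*} (S : List α) (m : ℕ) (t k : ℕ → ℕ)
    (ht : ∀ r : ℕ, 1 ≤ r → r ≤ m → 1 ≤ t r)
    (hk : ∀ r : ℕ, 1 ≤ r → r ≤ m - 1 → 1 ≤ k r)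
    (hfac : ocList S =
      ((List.range m).map
        (fun r => List.replicate (t (r + 1)) 1 ++ List.replicate (k (r + 1)) 0)).flatten) :
    m + ((m - 1) / 2) ^ 2 ≤ S.length := by
  classical
  rcases Nat.eq_zero_or_pos m with hm0 | hm1
  · subst hm0; simp
  set g : ℕ → List ℕ :=
    fun r => List.replicate (t (r + 1)) 1 ++ List.replicate (k (r + 1)) 0 with hg
  set A : ℕ → ℕ := fun r => ∑ j ∈ Finset.range r, (t (j + 1) + k (j + 1)) with hA
  have hA0 : A 0 = 0 := by simp [hA]
  have hAs : ∀ r, A (r + 1) = A r + (t (r + 1) + k (r + 1)) := by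
    intro r; simp [hA, Finset.sum_range_succ]
  have hglen : ∀ r, (g r).length = t (r + 1) + k (r + 1) := by
    intro r; simp [hg]
  have ht' : ∀ r, r < m → 1 ≤ t (r + 1) := fun r hr => ht (r + 1) (by omega) (by omega)
  have hk' : ∀ r, r + 1 < m → 1 ≤ k (r + 1) := fun r hr => hk (r + 1) (by omega) (by omega)
  -- length identity
  have hlen : S.length = A m := by
    have h1 : (ocList S).length = S.length := by simp [ocList]
    rw [hfac] at h1
    rw [OC9.flatten_len] at h1
    rw [hA]
    rw [← h1]
    apply Finset.sum_congr rfl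
    intro j _
    rw [hglen]
  -- A is monotone enough
  have hAstep : ∀ x, A x ≤ A (x + 1) := by intro x; rw [hAs]; omega
  have hAmono : ∀ x y, x ≤ y → A x ≤ A y := by
    intro x y hxy
    induction y with
    | zero => have hx0 : x = 0 := by omega
              simp [hx0]
    | succ z ih =>
      rcases Nat.lt_or_ge x (z + 1) with h | h
      · exact le_trans (ih (by omega)) (hAstep z)
      · have hxz : x = z + 1 := by omega
        simp [hxz]
  -- values of the OC array
  have hval : ∀ r, r < m → ∀ u, u < t (r + 1) + k (r + 1) →
      OCval S (A r + u + 1) = if u < t (r + 1) then 1 else 0 := by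
    intro r hr u hu
    obtain ⟨l2, hl⟩ := OC9.flatten_decomp g m r hr
    rw [← hfac] at hl
    have hFlen : (((List.range r).map g).flatten).length = A r := by
      rw [OC9.flatten_len, hA]
      exact Finset.sum_congr rfl (fun j _ => hglen j)
    have hbound : A r + u < S.length := by
      have h1 : A r + (t (r + 1) + k (r + 1)) = A (r + 1) := (hAs r).symm
      have h2 : A (r + 1) ≤ A m := hAmono (r + 1) m (by omega)
      omega
    -- getElem? chain
    have hoc : (ocList S)[A r + u]? = some (OCval S (A r + u + 1)) := by
      unfold ocList
      rw [List.getElem?_map, List.getElem?_range hbound]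
      rfl
    have hoc2 : (ocList S)[A r + u]? = (g r ++ l2)[u]? := by
      rw [hl, List.getElem?_append_right (by omega : (((List.range r).map g).flatten).length ≤ A r + u)]
      congr 1
      omega
    have hoc3 : (g r ++ l2)[u]? = some (if u < t (r + 1) then 1 else 0) := by
      rw [List.getElem?_append_left (by rw [hglen]; omega : u < (g r).length)]
      rw [hg]
      by_cases hut : u < t (r + 1)
      · rw [List.getElem?_append_left (by simp; omega : u < (List.replicate (t (r + 1)) (1:ℕ)).length)]
        rw [if_pos hut]
        rw [List.getElem?_eq_getElem (by simp; omega)]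
        simp
      · rw [List.getElem?_append_right (by simp; omega : (List.replicate (t (r + 1)) (1:ℕ)).length ≤ u)]
        rw [if_neg hut]
        rw [List.getElem?_eq_getElem (by simp; omega)]
        simp
    rw [hoc2, hoc3] at hoc
    exact (Option.some_injective _ hoc.symm)
  -- closed / open positions
  have hCl : ∀ r, r < m → ∀ u, u < t (r + 1) → IsClosedWord (S.take (A r + u + 1)) := by
    intro r hr u hu
    have := hval r hr u (by omega)
    rw [if_pos hu] at this
    exact OC9.OCval_one_iff.mp this
  have hOp : ∀ r, r < m → ∀ u, u < k (r + 1) →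
      ¬ IsClosedWord (S.take (A r + t (r + 1) + u + 1)) := by
    intro r hr u hu
    have h1 := hval r hr (t (r + 1) + u) (by omega)
    rw [if_neg (by omega)] at h1
    have h2 : A r + (t (r + 1) + u) + 1 = A r + t (r + 1) + u + 1 := by omega
    rw [h2] at h1
    intro hc
    have := OC9.OCval_one_iff.mpr hc
    omega
  -- main bound for the internal zero-runs
  have hmain := OC9.main_bound t k A ht' hk' hA0 hAs (by omega) hCl hOp
  -- summation
  have hsum : ∀ M, M < m → M + (∑ j ∈ Finset.range M, (j + 1) / 2) ≤ A M := by
    intro M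
    induction M with
    | zero => intro _; simp [hA0]
    | succ N ih =>
      intro hN
      have h1 := ih (by omega)
      have h2 := hmain N hN
      have h3 : (N + 1) / 2 ≤ k (N + 1) := by omega
      have h4 := hAs N
      have h5 := ht' N (by omega)
      rw [Finset.sum_range_succ]
      omega
  have hfin : m + (∑ j ∈ Finset.range (m - 1), (j + 1) / 2) ≤ A m := by
    have h1 := hsum (m - 1) (by omega)
    have h2 := hAs (m - 1)
    have h3 : m - 1 + 1 = m := by omega
    rw [h3] at h2
    have h4 := ht' (m - 1) (by omega)
    have h5 : 1 ≤ t (m - 1 + 1) := h4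
    rw [h3] at h5
    omega
  have hsd := OC9.sd_eq (m - 1)
  have hsq : ((m - 1) / 2) ^ 2 ≤ ∑ j ∈ Finset.range (m - 1), (j + 1) / 2 := by
    rw [hsd, pow_two]
    exact Nat.mul_le_mul_left _ (Nat.div_le_div_right (by omega))
  omega
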